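/- arXiv:0803.1331 — 2 statements merged into one kernel-verified Lean document; each statement's English description precedes it below -/
import Mathlib

section
/- Let L be a group and H a subgroup of L of finite index. For a group G and n ≥ 1, let r_n(G) denote the number of equivalence classes of irreducible n-dimensional complex representations of G. Assume r_n(L) is finite for every n. Then r_n(H) is finite for every n, and for every real number s, the series ∑_{n≥1} r_n(H)·n^{−s} converges if and only if the series ∑_{n≥1} r_n(L)·n^{−s} converges; in particular the representation zeta functions of H and L have the same abscissa of convergence. -/
/-- Two `n`-dimensional complex representations are equivalent if there is a
`G`-equivariant linear isomorphism between their spaces. -/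
def RepEquiv {G : Type*} [Group G] {n : ℕ} (ρ σ : Representation ℂ G (Fin n → ℂ)) : Prop :=
  ∃ e : (Fin n → ℂ) ≃ₗ[ℂ] (Fin n → ℂ), ∀ g v, e (ρ g v) = σ g (e v)

/-- An `n`-dimensional complex representation is irreducible if its space is nonzero
(`0 < n`) and it has no invariant subspaces other than `⊥` and `⊤`. -/
def IsIrrRep {G : Type*} [Group G] {n : ℕ} (ρ : Representation ℂ G (Fin n → ℂ)) : Prop :=
  0 < n ∧ ∀ W : Submodule ℂ (Fin n → ℂ), (∀ g, ∀ v ∈ W, ρ g v ∈ W) → W = ⊥ ∨ W = ⊤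

/-- The type of equivalence classes of irreducible `n`-dimensional complex
representations of `G`. -/
def IrrClasses (G : Type*) [Group G] (n : ℕ) : Type _ :=
  Quot (fun ρ σ : {ρ : Representation ℂ G (Fin n → ℂ) // IsIrrRep ρ} => RepEquiv ρ.1 σ.1)

/-- `r_n(G)`: the number of equivalence classes of irreducible `n`-dimensional complex
representations of `G`. -/
noncomputable def rn (G : Type*) [Group G] (n : ℕ) : ℕ :=
  Nat.card (IrrClasses G n)


namespace Stmt3
open Module

variable {G : Type*} [Group G] {V W X : Type*}
  [AddCommGroup V] [Module ℂ V] [AddCommGroup W] [Module ℂ W] [AddCommGroup X] [Module ℂ X]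

/-- A subspace is invariant under a representation. -/
def Invt (ρ : Representation ℂ G V) (U : Submodule ℂ V) : Prop :=
  ∀ g, ∀ v ∈ U, ρ g v ∈ U

/-- A representation is irreducible. -/
def IsIrr (ρ : Representation ℂ G V) : Prop :=
  (∃ v : V, v ≠ 0) ∧ ∀ U : Submodule ℂ V, Invt ρ U → U = ⊥ ∨ U = ⊤

/-- A linear map is equivariant. -/
def IsEquiv (ρ : Representation ℂ G V) (σ : Representation ℂ G W) (f : V →ₗ[ℂ] W) : Prop :=
  ∀ g v, f (ρ g v) = σ g (f v)

/-- Two representations are isomorphic. -/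
def IsoRep (ρ : Representation ℂ G V) (σ : Representation ℂ G W) : Prop :=
  ∃ e : V ≃ₗ[ℂ] W, ∀ g v, e (ρ g v) = σ g (e v)

theorem IsoRep.refl (ρ : Representation ℂ G V) : IsoRep ρ ρ :=
  ⟨LinearEquiv.refl ℂ V, fun _ _ => rfl⟩

theorem IsoRep.symm {ρ : Representation ℂ G V} {σ : Representation ℂ G W}
    (h : IsoRep ρ σ) : IsoRep σ ρ := by
  obtain ⟨e, he⟩ := h
  refine ⟨e.symm, fun g w => ?_⟩
  apply e.injective
  simp [he]

theorem IsoRep.trans {ρ : Representation ℂ G V} {σ : Representation ℂ G W}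
    {τ : Representation ℂ G X} (h : IsoRep ρ σ) (h' : IsoRep σ τ) : IsoRep ρ τ := by
  obtain ⟨e, he⟩ := h; obtain ⟨e', he'⟩ := h'
  exact ⟨e.trans e', fun g v => by simp [he, he']⟩

theorem invt_ker {ρ : Representation ℂ G V} {σ : Representation ℂ G W} {f : V →ₗ[ℂ] W}
    (hf : IsEquiv ρ σ f) : Invt ρ (LinearMap.ker f) := by
  intro g v hv
  simp only [LinearMap.mem_ker] at hv ⊢
  rw [hf g v, hv, map_zero]

theorem invt_range {ρ : Representation ℂ G V} {σ : Representation ℂ G W} {f : V →ₗ[ℂ] W}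
    (hf : IsEquiv ρ σ f) : Invt σ (LinearMap.range f) := by
  rintro g - ⟨v, rfl⟩
  exact ⟨ρ g v, (hf g v)⟩

/-- Schur: a nonzero equivariant map out of an irreducible rep is injective. -/
theorem ker_eq_bot_of_irr {ρ : Representation ℂ G V} {σ : Representation ℂ G W}
    {f : V →ₗ[ℂ] W} (hρ : IsIrr ρ) (hf : IsEquiv ρ σ f) (h0 : f ≠ 0) :
    LinearMap.ker f = ⊥ := by
  rcases hρ.2 _ (invt_ker hf) with h | h
  · exact h
  · exfalso; apply h0; ext v
    have : v ∈ LinearMap.ker f := h ▸ Submodule.mem_top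
    simpa using this

theorem range_eq_top_of_irr {ρ : Representation ℂ G V} {σ : Representation ℂ G W}
    {f : V →ₗ[ℂ] W} (hσ : IsIrr σ) (hf : IsEquiv ρ σ f) (h0 : f ≠ 0) :
    LinearMap.range f = ⊤ := by
  rcases hσ.2 _ (invt_range hf) with h | h
  · exfalso; apply h0; ext v
    have : f v ∈ LinearMap.range f := ⟨v, rfl⟩
    rw [h] at this; simpa using this
  · exact h

/-- The subrepresentation on an invariant subspace. -/
def subRep (ρ : Representation ℂ G V) (U : Submodule ℂ V) (h : Invt ρ U) :
    Representation ℂ G U where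
  toFun g := (ρ g).restrict (fun v hv => h g v hv)
  map_one' := by ext v; simp [LinearMap.restrict_apply]
  map_mul' g g' := by ext v; simp [LinearMap.restrict_apply]

@[simp] theorem subRep_apply {ρ : Representation ℂ G V} {U : Submodule ℂ V} (h : Invt ρ U)
    (g : G) (v : U) : (subRep ρ U h g v : V) = ρ g (v : V) := rfl

/-- The quotient representation. -/
def quotRep (ρ : Representation ℂ G V) (N : Submodule ℂ V) (h : Invt ρ N) :
    Representation ℂ G (V ⧸ N) where
  toFun g := N.mapQ N (ρ g) (fun v hv => h g v hv)
  map_one' := by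
    ext v
    simp [Submodule.mapQ_apply]
  map_mul' g g' := by
    ext v
    simp [Submodule.mapQ_apply]

theorem mkQ_equiv {ρ : Representation ℂ G V} {N : Submodule ℂ V} (h : Invt ρ N) :
    IsEquiv ρ (quotRep ρ N h) N.mkQ := by
  intro g v; simp [quotRep, Submodule.mapQ_apply]

theorem subtype_equiv {ρ : Representation ℂ G V} {U : Submodule ℂ V} (h : Invt ρ U) :
    IsEquiv (subRep ρ U h) ρ U.subtype := by
  intro g v; rfl

end Stmt3

namespace Stmt3
open Module

variable {G : Type*} [Group G] {V W X : Type*}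
  [AddCommGroup V] [Module ℂ V] [AddCommGroup W] [Module ℂ W] [AddCommGroup X] [Module ℂ X]

/-- `U` is an irreducible invariant subspace. -/
def IsIrrSub (ρ : Representation ℂ G V) (U : Submodule ℂ V) : Prop :=
  Invt ρ U ∧ U ≠ ⊥ ∧ ∀ U' ≤ U, Invt ρ U' → U' = ⊥ ∨ U' = U

/-- `N` is a maximal proper invariant subspace. -/
def IsMaxInvt (ρ : Representation ℂ G V) (N : Submodule ℂ V) : Prop :=
  Invt ρ N ∧ N ≠ ⊤ ∧ ∀ M, N ≤ M → Invt ρ M → M = N ∨ M = ⊤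

theorem isIrr_subRep {ρ : Representation ℂ G V} {U : Submodule ℂ V} (h : IsIrrSub ρ U) :
    IsIrr (subRep ρ U h.1) := by
  constructor
  · obtain ⟨u, hu, hu0⟩ := Submodule.exists_mem_ne_zero_of_ne_bot h.2.1
    exact ⟨⟨u, hu⟩, by simpa using hu0⟩
  · intro U' hU'
    have hle : (U'.map U.subtype) ≤ U := by
      rintro - ⟨x, -, rfl⟩; exact x.2
    have hinvt : Invt ρ (U'.map U.subtype) := by
      rintro g - ⟨x, hx, rfl⟩
      exact ⟨subRep ρ U h.1 g x, hU' g x hx, rfl⟩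
    rcases h.2.2 _ hle hinvt with h' | h'
    · left
      rw [eq_bot_iff]
      rintro x hx
      have : (x : V) ∈ U'.map U.subtype := ⟨x, hx, rfl⟩
      rw [h'] at this
      simp only [Submodule.mem_bot] at this ⊢
      exact Subtype.ext this
    · right
      rw [eq_top_iff]
      rintro ⟨x, hx⟩ -
      have hx' : x ∈ U'.map U.subtype := by rw [h']; exact hx
      obtain ⟨y, hy, hyx⟩ := hx'
      have : y = (⟨x, hx⟩ : U) := Subtype.ext hyx
      exact this ▸ hy

theorem isIrrSub_of_isIrr {ρ : Representation ℂ G V} {U : Submodule ℂ V} (hU : Invt ρ U)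
    (h : IsIrr (subRep ρ U hU)) : IsIrrSub ρ U := by
  refine ⟨hU, ?_, ?_⟩
  · obtain ⟨⟨v, hv⟩, hv0⟩ := h.1
    intro hbot
    apply hv0
    ext
    simpa [hbot] using hv
  · intro U' hle hinvt
    have := h.2 (U'.comap U.subtype) (by
      intro g v hv
      simpa [Submodule.mem_comap] using hinvt g v hv)
    rcases this with h' | h'
    · left
      rw [eq_bot_iff]
      intro x hx
      have : (⟨x, hle hx⟩ : U) ∈ U'.comap U.subtype := hx
      rw [h'] at this
      simpa using this
    · right
      refine le_antisymm hle ?_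
      intro x hx
      have : (⟨x, hx⟩ : U) ∈ U'.comap U.subtype := h' ▸ Submodule.mem_top
      exact this

theorem isIrr_quotRep {ρ : Representation ℂ G V} {N : Submodule ℂ V} (h : IsMaxInvt ρ N) :
    IsIrr (quotRep ρ N h.1) := by
  constructor
  · obtain ⟨v, hv⟩ : ∃ v, v ∉ N := by
      by_contra hc
      push_neg at hc
      exact h.2.1 (eq_top_iff.mpr fun x _ => hc x)
    exact ⟨N.mkQ v, by simpa [Submodule.Quotient.mk_eq_zero] using hv⟩
  · intro U' hU'
    set M := U'.comap N.mkQ with hM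
    have hNM : N ≤ M := by
      intro x hx
      have : N.mkQ x = 0 := by simpa [Submodule.Quotient.mk_eq_zero] using hx
      simp [hM, Submodule.mem_comap, this]
    have hMinvt : Invt ρ M := by
      intro g v hv
      have : quotRep ρ N h.1 g (N.mkQ v) ∈ U' := hU' g _ hv
      rwa [← mkQ_equiv h.1 g v] at this
    have hU'M : U' = M.map N.mkQ := by
      rw [hM, Submodule.map_comap_eq_of_surjective (Submodule.mkQ_surjective N)]
    rcases h.2.2 M hNM hMinvt with h' | h'
    · left
      rw [hU'M, h', eq_bot_iff]
      rintro - ⟨x, hx, rfl⟩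
      simpa [Submodule.Quotient.mk_eq_zero] using hx
    · right
      rw [hU'M, h', Submodule.map_top, Submodule.range_mkQ]

end Stmt3

namespace Stmt3
open Module

variable {G : Type*} [Group G] {V W X : Type*}
  [AddCommGroup V] [Module ℂ V] [AddCommGroup W] [Module ℂ W] [AddCommGroup X] [Module ℂ X]

theorem isIrr_of_isoRep {ρ : Representation ℂ G V} {σ : Representation ℂ G W}
    (h : IsoRep ρ σ) (hρ : IsIrr ρ) : IsIrr σ := by
  obtain ⟨e, he⟩ := h
  constructor
  · obtain ⟨v, hv⟩ := hρ.1
    exact ⟨e v, fun h0 => hv (by simpa using e.injective (by simpa using h0))⟩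
  · intro U hU
    have : Invt ρ (U.comap e.toLinearMap) := by
      intro g v hv
      simpa [Submodule.mem_comap, he g v] using hU g (e v) hv
    rcases hρ.2 _ this with h' | h'
    · left
      rw [eq_bot_iff]
      intro u hu
      have : e.symm u ∈ U.comap e.toLinearMap := by
        simpa [Submodule.mem_comap] using hu
      rw [h'] at this
      simpa using (by simpa using this : e.symm u = 0)
    · right
      rw [eq_top_iff]
      intro u _
      have : e.symm u ∈ U.comap e.toLinearMap := h' ▸ Submodule.mem_top
      simpa [Submodule.mem_comap] using this

/-- An injective equivariant map realizes the source as an invariant subspace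
of the target. -/
theorem isoRep_range {ρ : Representation ℂ G V} {σ : Representation ℂ G W}
    {f : V →ₗ[ℂ] W} (hf : IsEquiv ρ σ f) (hinj : LinearMap.ker f = ⊥) :
    IsoRep ρ (subRep σ (LinearMap.range f) (invt_range hf)) := by
  refine ⟨LinearEquiv.ofInjective f (LinearMap.ker_eq_bot.mp hinj), fun g v => ?_⟩
  ext
  simp [LinearEquiv.ofInjective_apply, hf g v]

section FD
variable [FiniteDimensional ℂ V]

theorem exists_isIrrSub_le {ρ : Representation ℂ G V} {U : Submodule ℂ V}
    (hU : Invt ρ U) (hU0 : U ≠ ⊥) : ∃ U' ≤ U, IsIrrSub ρ U' := by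
  suffices h : ∀ n (U : Submodule ℂ V), finrank ℂ U = n → Invt ρ U → U ≠ ⊥ →
      ∃ U' ≤ U, IsIrrSub ρ U' from h _ U rfl hU hU0
  intro n
  induction n using Nat.strong_induction_on with
  | _ n ih =>
    intro U hn hU hU0
    by_cases hirr : ∀ U' ≤ U, Invt ρ U' → U' = ⊥ ∨ U' = U
    · exact ⟨U, le_refl U, hU, hU0, hirr⟩
    · push_neg at hirr
      obtain ⟨U', hle, hinvt, hne0, hneU⟩ := hirr
      have hlt : U' < U := lt_of_le_of_ne hle hneU
      obtain ⟨U'', hle'', h''⟩ := ih (finrank ℂ U')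
        (hn ▸ Submodule.finrank_lt_finrank_of_lt hlt) U' rfl hinvt hne0
      exact ⟨U'', hle''.trans hle, h''⟩

theorem exists_isMaxInvt_ge {ρ : Representation ℂ G V} {N : Submodule ℂ V}
    (hN : Invt ρ N) (hN1 : N ≠ ⊤) : ∃ M, N ≤ M ∧ IsMaxInvt ρ M := by
  suffices h : ∀ n (N : Submodule ℂ V), finrank ℂ V - finrank ℂ N = n → Invt ρ N → N ≠ ⊤ →
      ∃ M, N ≤ M ∧ IsMaxInvt ρ M from h _ N rfl hN hN1
  intro n
  induction n using Nat.strong_induction_on with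
  | _ n ih =>
    intro N hn hN hN1
    by_cases hmax : ∀ M, N ≤ M → Invt ρ M → M = N ∨ M = ⊤
    · exact ⟨N, le_refl N, hN, hN1, hmax⟩
    · push_neg at hmax
      obtain ⟨M, hle, hinvt, hneN, hneT⟩ := hmax
      have hlt : N < M := lt_of_le_of_ne hle (Ne.symm hneN)
      have hrk : finrank ℂ V - finrank ℂ M < finrank ℂ V - finrank ℂ N := by
        have h1 : finrank ℂ N < finrank ℂ M := Submodule.finrank_lt_finrank_of_lt hlt
        have h2 : finrank ℂ M ≤ finrank ℂ V := Submodule.finrank_le M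
        have h3 : finrank ℂ M < finrank ℂ V :=
          lt_of_le_of_ne h2 (fun h => hneT (Submodule.eq_top_of_finrank_eq h))
        omega
      obtain ⟨M', hle', h'⟩ := ih _ (hn ▸ hrk) M rfl hinvt hneT
      exact ⟨M', hle.trans hle', h'⟩
end FD

end Stmt3

namespace Stmt3
open Module

variable {G : Type*} [Group G] {V W : Type*}
  [AddCommGroup V] [Module ℂ V] [AddCommGroup W] [Module ℂ W]

/-- All irreducible classes of `G`, of all dimensions. -/
abbrev IrrCl (G : Type*) [Group G] := Σ n : ℕ, IrrClasses G n

theorem isIrrRep_iff {n : ℕ} (ρ : Representation ℂ G (Fin n → ℂ)) :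
    IsIrrRep ρ ↔ IsIrr ρ := by
  constructor
  · rintro ⟨hn, hirr⟩
    haveI : Nonempty (Fin n) := ⟨⟨0, hn⟩⟩
    exact ⟨exists_ne 0, fun U hU => hirr U hU⟩
  · rintro ⟨⟨v, hv⟩, hirr⟩
    refine ⟨?_, fun U hU => hirr U hU⟩
    rcases Nat.eq_zero_or_pos n with h | h
    · subst h
      exact absurd (Subsingleton.elim v 0) hv
    · exact h

/-- Transport a representation along a linear equivalence. -/
def transport (ρ : Representation ℂ G V) (e : V ≃ₗ[ℂ] W) : Representation ℂ G W where
  toFun g := e.toLinearMap ∘ₗ ρ g ∘ₗ e.symm.toLinearMap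
  map_one' := by ext w; simp
  map_mul' g g' := by ext w; simp

theorem isoRep_transport (ρ : Representation ℂ G V) (e : V ≃ₗ[ℂ] W) :
    IsoRep ρ (transport ρ e) :=
  ⟨e, fun g v => by simp [transport]⟩

/-- The class of an irreducible finite-dimensional representation. -/
noncomputable def classOf (ρ : Representation ℂ G V) [FiniteDimensional ℂ V]
    (hρ : IsIrr ρ) : IrrCl G :=
  ⟨finrank ℂ V, Quot.mk _ ⟨transport ρ (Module.finBasis ℂ V).equivFun,
    (isIrrRep_iff _).mpr (isIrr_of_isoRep (isoRep_transport _ _) hρ)⟩⟩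

@[simp] theorem classOf_fst (ρ : Representation ℂ G V) [FiniteDimensional ℂ V]
    (hρ : IsIrr ρ) : (classOf ρ hρ).1 = finrank ℂ V := rfl

theorem repEquiv_equivalence (G : Type*) [Group G] (n : ℕ) :
    Equivalence (fun ρ σ : {ρ : Representation ℂ G (Fin n → ℂ) // IsIrrRep ρ} =>
      RepEquiv ρ.1 σ.1) :=
  ⟨fun a => IsoRep.refl a.1, fun h => IsoRep.symm h, fun h h' => IsoRep.trans h h'⟩

theorem sigma_quot_eq {n m : ℕ} (hnm : n = m)
    {ρ : Representation ℂ G (Fin n → ℂ)} {σ : Representation ℂ G (Fin m → ℂ)}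
    (hρ : IsIrrRep ρ) (hσ : IsIrrRep σ) (hiso : IsoRep ρ σ) :
    (⟨n, Quot.mk _ ⟨ρ, hρ⟩⟩ : IrrCl G) = ⟨m, Quot.mk _ ⟨σ, hσ⟩⟩ := by
  subst hnm
  exact congrArg _ (Quot.sound hiso)

theorem isoRep_of_sigma_eq {n m : ℕ}
    {a : {ρ : Representation ℂ G (Fin n → ℂ) // IsIrrRep ρ}}
    {b : {ρ : Representation ℂ G (Fin m → ℂ) // IsIrrRep ρ}}
    (h : (⟨n, Quot.mk _ a⟩ : IrrCl G) = ⟨m, Quot.mk _ b⟩) : IsoRep a.1 b.1 := by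
  obtain ⟨rfl, h2⟩ := Sigma.mk.inj_iff.mp h
  have h3 : (Quot.mk _ a : IrrClasses G n) = Quot.mk _ b := eq_of_heq h2
  exact ((repEquiv_equivalence G n).eqvGen_iff).mp (Quot.eq.mp h3)

theorem classOf_eq_of_isoRep {ρ : Representation ℂ G V} {σ : Representation ℂ G W}
    [FiniteDimensional ℂ V] [FiniteDimensional ℂ W]
    (hρ : IsIrr ρ) (hσ : IsIrr σ) (h : IsoRep ρ σ) :
    classOf ρ hρ = classOf σ hσ := by
  obtain ⟨e, -⟩ := id h
  refine sigma_quot_eq (by exact LinearEquiv.finrank_eq e) _ _ ?_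
  exact (((isoRep_transport ρ _).symm.trans h).trans (isoRep_transport σ _))

theorem classOf_mk {n : ℕ} (ρ : Representation ℂ G (Fin n → ℂ)) (hρ : IsIrr ρ) :
    classOf ρ hρ = ⟨n, Quot.mk _ ⟨ρ, (isIrrRep_iff ρ).mpr hρ⟩⟩ :=
  sigma_quot_eq (Module.finrank_fin_fun ℂ) _ _ (isoRep_transport ρ _).symm

/-- A chosen representative of a class. -/
noncomputable def repOf (c : IrrCl G) : Representation ℂ G (Fin c.1 → ℂ) :=
  (Quot.exists_rep c.2).choose.1

theorem repOf_irrRep (c : IrrCl G) : IsIrrRep (repOf c) :=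
  (Quot.exists_rep c.2).choose.2

theorem repOf_irr (c : IrrCl G) : IsIrr (repOf c) :=
  (isIrrRep_iff _).mp (repOf_irrRep c)

theorem deg_pos (c : IrrCl G) : 0 < c.1 := (repOf_irrRep c).1

theorem classOf_repOf (c : IrrCl G) : classOf (repOf c) (repOf_irr c) = c := by
  rw [classOf_mk]
  have h1 : (⟨(repOf c), (isIrrRep_iff (repOf c)).mpr (repOf_irr c)⟩ :
      {ρ : Representation ℂ G (Fin c.1 → ℂ) // IsIrrRep ρ}) = (Quot.exists_rep c.2).choose := by
    exact Subtype.ext rfl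
  rw [h1, (Quot.exists_rep c.2).choose_spec]

/-- Any rep with the class of `c` is isomorphic to `repOf c`. -/
theorem isoRep_repOf {ρ : Representation ℂ G V} [FiniteDimensional ℂ V] (hρ : IsIrr ρ)
    {c : IrrCl G} (h : classOf ρ hρ = c) : IsoRep ρ (repOf c) := by
  subst h
  have key : classOf ρ hρ = classOf (repOf (classOf ρ hρ)) (repOf_irr _) :=
    (classOf_repOf (classOf ρ hρ)).symm
  have h2 : IsoRep (transport ρ (Module.finBasis ℂ V).equivFun)
      (transport (repOf (classOf ρ hρ)) (Module.finBasis ℂ _).equivFun) :=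
    isoRep_of_sigma_eq key
  exact ((isoRep_transport ρ _).trans h2).trans (isoRep_transport (repOf _) _).symm

instance irrClasses_zero_empty : IsEmpty (IrrClasses G 0) :=
  ⟨fun q => by
    obtain ⟨a, -⟩ := Quot.exists_rep q
    exact Nat.lt_irrefl 0 a.2.1⟩

end Stmt3

namespace Stmt3
open Module

variable {G : Type*} [Group G] {V W X : Type*}
  [AddCommGroup V] [Module ℂ V] [AddCommGroup W] [Module ℂ W] [AddCommGroup X] [Module ℂ X]

theorem IsEquiv.comp {ρ : Representation ℂ G V} {σ : Representation ℂ G W}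
    {τ : Representation ℂ G X} {f : V →ₗ[ℂ] W} {g : W →ₗ[ℂ] X}
    (hf : IsEquiv ρ σ f) (hg : IsEquiv σ τ g) : IsEquiv ρ τ (g ∘ₗ f) := by
  intro x v
  simp only [LinearMap.comp_apply, hf x v, hg x (f v)]

theorem invt_inf {τ : Representation ℂ G V} {A B : Submodule ℂ V}
    (hA : Invt τ A) (hB : Invt τ B) : Invt τ (A ⊓ B) :=
  fun g v hv => ⟨hA g v hv.1, hB g v hv.2⟩

theorem invt_sup {τ : Representation ℂ G V} {A B : Submodule ℂ V}
    (hA : Invt τ A) (hB : Invt τ B) : Invt τ (A ⊔ B) := by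
  intro g v hv
  obtain ⟨a, ha, b, hb, rfl⟩ := Submodule.mem_sup.mp hv
  rw [map_add]
  exact Submodule.add_mem_sup (hA g a ha) (hB g b hb)

theorem invt_bot (τ : Representation ℂ G V) : Invt τ (⊥ : Submodule ℂ V) := by
  intro g v hv
  simp only [Submodule.mem_bot] at hv ⊢
  rw [hv, map_zero]

theorem isoRep_of_submodule_eq {σ : Representation ℂ G W} {A B : Submodule ℂ W}
    (hA : Invt σ A) (hB : Invt σ B) (h : A = B) :
    IsoRep (subRep σ A hA) (subRep σ B hB) := by
  subst h; exact IsoRep.refl _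

/-- `c` is realizable as an irreducible invariant subspace of `τ`. -/
def RealizableSub (τ : Representation ℂ G V) [FiniteDimensional ℂ V] (c : IrrCl G) : Prop :=
  ∃ U : Submodule ℂ V, ∃ h : IsIrrSub τ U,
    classOf (subRep τ U h.1) (isIrr_subRep h) = c

/-- A nonzero equivariant map from an irreducible representation realizes its class
in the target. -/
theorem realizableSub_of_equiv {ρ : Representation ℂ G V} {σ : Representation ℂ G W}
    [FiniteDimensional ℂ V] [FiniteDimensional ℂ W]
    (hρ : IsIrr ρ) {f : V →ₗ[ℂ] W} (hf : IsEquiv ρ σ f) (hf0 : f ≠ 0) :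
    RealizableSub σ (classOf ρ hρ) := by
  have hker := ker_eq_bot_of_irr hρ hf hf0
  have hiso := isoRep_range hf hker
  have hirr : IsIrr (subRep σ (LinearMap.range f) (invt_range hf)) :=
    isIrr_of_isoRep hiso hρ
  have hsub : IsIrrSub σ (LinearMap.range f) := isIrrSub_of_isIrr (invt_range hf) hirr
  refine ⟨LinearMap.range f, hsub, ?_⟩
  exact classOf_eq_of_isoRep hirr hρ (IsoRep.symm hiso)

theorem sum_deg_aux (τ : Representation ℂ G V) [FiniteDimensional ℂ V] :
    ∀ (T : Finset (IrrCl G)), (∀ c ∈ T, RealizableSub τ c) →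
      ∃ N : Submodule ℂ V, Invt τ N ∧ finrank ℂ N = ∑ c ∈ T, c.1 ∧
        ∀ (U : Submodule ℂ V) (h : IsIrrSub τ U), U ≤ N →
          classOf (subRep τ U h.1) (isIrr_subRep h) ∈ T := by
  classical
  intro T
  induction T using Finset.induction with
  | empty =>
    intro _
    refine ⟨⊥, invt_bot τ, by simp, ?_⟩
    intro U h hle
    exact absurd (le_bot_iff.mp hle) h.2.1
  | @insert c₀ T hc₀ ih =>
    intro hT'
    obtain ⟨N, hNi, hNr, hNm⟩ := ih (fun c hc => hT' c (Finset.mem_insert_of_mem hc))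
    obtain ⟨U₀, hU₀, hU₀c⟩ := hT' c₀ (Finset.mem_insert_self _ _)
    have hinter : U₀ ⊓ N = ⊥ := by
      rcases hU₀.2.2 (U₀ ⊓ N) inf_le_left (invt_inf hU₀.1 hNi) with h | h
      · exact h
      · exfalso
        have hle : U₀ ≤ N := inf_eq_left.mp h
        have := hNm U₀ hU₀ hle
        rw [hU₀c] at this
        exact hc₀ this
    have hU₀deg : finrank ℂ U₀ = c₀.1 := by rw [← hU₀c, classOf_fst]
    refine ⟨U₀ ⊔ N, invt_sup hU₀.1 hNi, ?_, ?_⟩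
    · have := Submodule.finrank_sup_add_finrank_inf_eq U₀ N
      rw [hinter] at this
      simp only [finrank_bot, add_zero] at this
      rw [Finset.sum_insert hc₀, this, hU₀deg, hNr]
    · intro U h hle
      by_cases hUN : U ≤ N
      · exact Finset.mem_insert_of_mem (hNm U h hUN)
      · have hUinter : U ⊓ N = ⊥ := by
          rcases h.2.2 (U ⊓ N) inf_le_left (invt_inf h.1 hNi) with h' | h'
          · exact h'
          · exact absurd (inf_eq_left.mp h') hUN
        set fU : U →ₗ[ℂ] V ⧸ N := N.mkQ ∘ₗ U.subtype with hfU_def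
        set fU₀ : U₀ →ₗ[ℂ] V ⧸ N := N.mkQ ∘ₗ U₀.subtype with hfU₀_def
        have hfU : IsEquiv (subRep τ U h.1) (quotRep τ N hNi) fU :=
          (subtype_equiv h.1).comp (mkQ_equiv hNi)
        have hfU₀ : IsEquiv (subRep τ U₀ hU₀.1) (quotRep τ N hNi) fU₀ :=
          (subtype_equiv hU₀.1).comp (mkQ_equiv hNi)
        have hkerU : LinearMap.ker fU = ⊥ := by
          rw [eq_bot_iff]
          rintro ⟨v, hv⟩ hker
          have hvN : v ∈ N := by
            simpa [hfU_def, Submodule.Quotient.mk_eq_zero] using hker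
          have : v ∈ U ⊓ N := ⟨hv, hvN⟩
          rw [hUinter] at this
          exact Subtype.ext (by simpa using this)
        have hkerU₀ : LinearMap.ker fU₀ = ⊥ := by
          rw [eq_bot_iff]
          rintro ⟨v, hv⟩ hker
          have hvN : v ∈ N := by
            simpa [hfU₀_def, Submodule.Quotient.mk_eq_zero] using hker
          have : v ∈ U₀ ⊓ N := ⟨hv, hvN⟩
          rw [hinter] at this
          exact Subtype.ext (by simpa using this)
        have hisoU := isoRep_range hfU hkerU
        have hisoU₀ := isoRep_range hfU₀ hkerU₀
        have hrange_le : LinearMap.range fU ≤ LinearMap.range fU₀ := by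
          rintro - ⟨⟨v, hv⟩, rfl⟩
          obtain ⟨a, ha, b, hb, rfl⟩ := Submodule.mem_sup.mp (hle hv)
          refine ⟨⟨a, ha⟩, ?_⟩
          simp only [hfU_def, hfU₀_def, LinearMap.comp_apply, Submodule.subtype_apply]
          rw [map_add]
          have : N.mkQ b = 0 := by simpa [Submodule.Quotient.mk_eq_zero] using hb
          rw [this, add_zero]
        have hsubU₀ : IsIrrSub (quotRep τ N hNi) (LinearMap.range fU₀) :=
          isIrrSub_of_isIrr (invt_range hfU₀) (isIrr_of_isoRep hisoU₀ (isIrr_subRep hU₀))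
        have hne : LinearMap.range fU ≠ ⊥ := by
          obtain ⟨u, hu, hu0⟩ := Submodule.exists_mem_ne_zero_of_ne_bot h.2.1
          intro hbot
          have : fU ⟨u, hu⟩ ∈ LinearMap.range fU := ⟨_, rfl⟩
          rw [hbot] at this
          have : fU ⟨u, hu⟩ = 0 := by simpa using this
          have : (⟨u, hu⟩ : U) ∈ LinearMap.ker fU := this
          rw [hkerU] at this
          exact hu0 (by simpa [Subtype.ext_iff] using this)
        have heq : LinearMap.range fU = LinearMap.range fU₀ :=
          (hsubU₀.2.2 _ hrange_le (invt_range hfU)).resolve_left hne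
        have e1 := classOf_eq_of_isoRep (isIrr_subRep h) (isIrr_of_isoRep hisoU (isIrr_subRep h)) hisoU
        have e2 := classOf_eq_of_isoRep (isIrr_subRep hU₀) (isIrr_of_isoRep hisoU₀ (isIrr_subRep hU₀)) hisoU₀
        have e3 := classOf_eq_of_isoRep
          (isIrr_of_isoRep hisoU (isIrr_subRep h))
          (isIrr_of_isoRep hisoU₀ (isIrr_subRep hU₀))
          (isoRep_of_submodule_eq (invt_range hfU) (invt_range hfU₀) heq)
        rw [e1, e3, ← e2, hU₀c]
        exact Finset.mem_insert_self _ _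

theorem sum_deg_le (τ : Representation ℂ G V) [FiniteDimensional ℂ V]
    (T : Finset (IrrCl G)) (hT : ∀ c ∈ T, RealizableSub τ c) :
    ∑ c ∈ T, c.1 ≤ finrank ℂ V := by
  obtain ⟨N, -, hNr, -⟩ := sum_deg_aux τ T hT
  rw [← hNr]
  exact Submodule.finrank_le N

theorem realizable_finite (τ : Representation ℂ G V) [FiniteDimensional ℂ V] :
    {c : IrrCl G | RealizableSub τ c}.Finite := by
  by_contra hinf
  obtain ⟨t, hts, htc⟩ := Set.Infinite.exists_subset_card_eq hinf (finrank ℂ V + 1)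
  have h1 := sum_deg_le τ t (fun c hc => hts hc)
  have h2 : t.card ≤ ∑ c ∈ t, c.1 := by
    calc t.card = t.card • 1 := by simp
    _ ≤ ∑ c ∈ t, c.1 := Finset.card_nsmul_le_sum t _ 1 (fun c _ => deg_pos c)
  omega

end Stmt3

namespace Stmt3
open Module

variable {L : Type*} [Group L]
variable {V W : Type*} [AddCommGroup V] [Module ℂ V] [AddCommGroup W] [Module ℂ W]

/-- Restriction of a representation to a subgroup. -/
def resRep (H : Subgroup L) (σ : Representation ℂ L W) : Representation ℂ H W :=
  σ.comp H.subtype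

@[simp] theorem resRep_apply (H : Subgroup L) (σ : Representation ℂ L W) (h : H) (w : W) :
    resRep H σ h w = σ (h : L) w := rfl

theorem isEquiv_resRep (H : Subgroup L) {σ : Representation ℂ L W} {σ' : Representation ℂ L V}
    {f : W →ₗ[ℂ] V} (hf : IsEquiv σ σ' f) : IsEquiv (resRep H σ) (resRep H σ') f :=
  fun h v => hf (h : L) v

theorem isoRep_resRep (H : Subgroup L) {σ : Representation ℂ L W} {σ' : Representation ℂ L V}
    (h : IsoRep σ σ') : IsoRep (resRep H σ) (resRep H σ') := by
  obtain ⟨e, he⟩ := h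
  exact ⟨e, fun g v => he (g : L) v⟩

variable {H : Subgroup L}

/-- The underlying space of the coinduced representation. -/
def coindV (ρ : Representation ℂ H V) : Submodule ℂ (L → V) where
  carrier := {f | ∀ (x : L) (h : H), f (x * h) = ρ h⁻¹ (f x)}
  add_mem' := by
    intro f g hf hg x h
    simp only [Pi.add_apply, hf x h, hg x h, map_add]
  zero_mem' := by
    intro x h
    simp
  smul_mem' := by
    intro c f hf x h
    simp only [Pi.smul_apply, hf x h, map_smul]

theorem coindV_prop {ρ : Representation ℂ H V} (f : coindV (L := L) ρ) (x : L) (h : H) :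
    (f : L → V) (x * h) = ρ h⁻¹ ((f : L → V) x) := f.2 x h

/-- The coinduced representation of `L` on `coindV ρ`. -/
def coindRep (ρ : Representation ℂ H V) : Representation ℂ L (coindV (L := L) ρ) where
  toFun g :=
    { toFun := fun f => ⟨fun x => (f : L → V) (g⁻¹ * x), by
        intro x h
        show (f : L → V) (g⁻¹ * (x * h)) = ρ h⁻¹ ((f : L → V) (g⁻¹ * x))
        rw [← mul_assoc]
        exact f.2 (g⁻¹ * x) h⟩
      map_add' := by intro f g'; ext x; simp
      map_smul' := by intro c f; ext x; simp }
  map_one' := by ext f x; simp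
  map_mul' g g' := by
    ext f x
    simp [mul_assoc]

@[simp] theorem coindRep_apply {ρ : Representation ℂ H V} (g : L) (f : coindV (L := L) ρ)
    (x : L) : ((coindRep ρ g f : coindV (L := L) ρ) : L → V) x = (f : L → V) (g⁻¹ * x) := rfl

/-- The canonical `H`-element attached to `x`: `(mk x).out⁻¹ * x`. -/
noncomputable def secElt (H : Subgroup L) (x : L) : H :=
  ⟨(QuotientGroup.mk x : L ⧸ H).out⁻¹ * x,
    QuotientGroup.eq.mp (QuotientGroup.out_eq' (QuotientGroup.mk x : L ⧸ H))⟩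

theorem out_mul_secElt (H : Subgroup L) (x : L) :
    (QuotientGroup.mk x : L ⧸ H).out * (secElt H x : L) = x := by
  simp [secElt, mul_inv_cancel_left]

theorem secElt_mul_mem (x : L) (h : H) : secElt H (x * h) = secElt H x * h := by
  apply Subtype.ext
  show (QuotientGroup.mk (x * h) : L ⧸ H).out⁻¹ * (x * h) =
    ((QuotientGroup.mk x : L ⧸ H).out⁻¹ * x) * h
  rw [QuotientGroup.mk_mul_of_mem x h.2, mul_assoc]

/-- Evaluation on coset representatives is a linear isomorphism. -/
noncomputable def coindEquiv (ρ : Representation ℂ H V) :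
    coindV (L := L) ρ ≃ₗ[ℂ] ((L ⧸ H) → V) := by
  refine LinearEquiv.ofLinear
    { toFun := fun f c => (f : L → V) c.out
      map_add' := by intro f g; ext c; simp
      map_smul' := by intro c f; ext x; simp }
    { toFun := fun u => ⟨fun x => ρ (secElt H x)⁻¹ (u (QuotientGroup.mk x)), by
        intro x h
        show ρ (secElt H (x * h))⁻¹ (u (QuotientGroup.mk (x * h))) = _
        rw [secElt_mul_mem, QuotientGroup.mk_mul_of_mem x h.2, mul_inv_rev, map_mul]
        rfl⟩
      map_add' := by intro u v; ext x; simp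
      map_smul' := by intro c u; ext x; simp } ?_ ?_
  · ext u c
    simp only [LinearMap.coe_comp, Function.comp_apply, LinearMap.coe_mk, AddHom.coe_mk,
      LinearMap.id_coe, id_eq]
    have h1 : secElt H (Quotient.out c) = 1 := by
      apply Subtype.ext
      show (QuotientGroup.mk c.out : L ⧸ H).out⁻¹ * c.out = 1
      rw [QuotientGroup.out_eq' c]
      exact inv_mul_cancel _
    rw [h1, QuotientGroup.out_eq' c]
    simp
  · ext f x
    simp only [LinearMap.coe_comp, Function.comp_apply, LinearMap.coe_mk, AddHom.coe_mk,
      LinearMap.id_coe, id_eq]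
    conv_rhs => rw [← out_mul_secElt H x, coindV_prop f]

theorem coind_finrank [FiniteDimensional ℂ V] (hH : H.index ≠ 0)
    (ρ : Representation ℂ H V) :
    finrank ℂ (coindV (L := L) ρ) = H.index * finrank ℂ V := by
  haveI : Finite (L ⧸ H) := Nat.finite_of_card_ne_zero hH
  haveI : Fintype (L ⧸ H) := Fintype.ofFinite _
  rw [LinearEquiv.finrank_eq (coindEquiv ρ), Module.finrank_pi_fintype,
    Finset.sum_const, Finset.card_univ, smul_eq_mul]
  congr 1
  rw [Subgroup.index, Nat.card_eq_fintype_card]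

end Stmt3

namespace Stmt3
open Module

variable {L : Type*} [Group L] {H : Subgroup L}
variable {V W : Type*} [AddCommGroup V] [Module ℂ V] [AddCommGroup W] [Module ℂ W]

theorem coindV_fd [FiniteDimensional ℂ V] (hH : H.index ≠ 0) (ρ : Representation ℂ H V) :
    FiniteDimensional ℂ (coindV (L := L) ρ) := by
  haveI : Finite (L ⧸ H) := Nat.finite_of_card_ne_zero hH
  haveI : Fintype (L ⧸ H) := Fintype.ofFinite _
  exact LinearEquiv.finiteDimensional (coindEquiv ρ).symm

open Classical in
/-- The unit `V → coindV ρ`, supported on `H`. -/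
noncomputable def etaMap (ρ : Representation ℂ H V) : V →ₗ[ℂ] coindV (L := L) ρ where
  toFun v := ⟨fun x => if hx : x ∈ H then ρ (⟨x, hx⟩ : H)⁻¹ v else 0, by
    intro x h
    dsimp only
    by_cases hx : x ∈ H
    · have hxh : (x * h : L) ∈ H := mul_mem hx h.2
      rw [dif_pos hx, dif_pos hxh]
      have he : (⟨(x * h : L), hxh⟩ : H) = ⟨x, hx⟩ * h := Subtype.ext rfl
      rw [he, mul_inv_rev, map_mul]
      rfl
    · have hxh : (x * h : L) ∉ H := by
        intro hc
        apply hx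
        have := mul_mem hc (inv_mem h.2)
        simpa [mul_assoc] using this
      rw [dif_neg hx, dif_neg hxh, map_zero]⟩
  map_add' v v' := by
    apply Subtype.ext
    funext x
    by_cases hx : x ∈ H <;> simp [hx]
  map_smul' c v := by
    apply Subtype.ext
    funext x
    by_cases hx : x ∈ H <;> simp [hx]

theorem eta_equiv (ρ : Representation ℂ H V) :
    IsEquiv ρ (resRep H (coindRep ρ)) (etaMap ρ) := by
  classical
  intro h₀ v
  apply Subtype.ext
  funext x
  show (if hx : x ∈ H then ρ (⟨x, hx⟩ : H)⁻¹ (ρ h₀ v) else 0) =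
    (if hx : ((h₀ : L)⁻¹ * x) ∈ H then ρ (⟨(h₀ : L)⁻¹ * x, hx⟩ : H)⁻¹ v else 0)
  by_cases hx : x ∈ H
  · have hx' : ((h₀ : L)⁻¹ * x) ∈ H := mul_mem (inv_mem h₀.2) hx
    rw [dif_pos hx, dif_pos hx']
    have he : (⟨(h₀ : L)⁻¹ * x, hx'⟩ : H)⁻¹ = (⟨x, hx⟩ : H)⁻¹ * h₀ := by
      apply Subtype.ext
      simp [mul_inv_rev]
    rw [he, map_mul]
    rfl
  · have hx' : ((h₀ : L)⁻¹ * x) ∉ H := by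
      intro hc
      apply hx
      have := mul_mem h₀.2 hc
      simpa [← mul_assoc] using this
    rw [dif_neg hx, dif_neg hx']

theorem coind_generated (hH : H.index ≠ 0) {ρ : Representation ℂ H V}
    {M : Submodule ℂ (coindV (L := L) ρ)} (hM : Invt (coindRep ρ) M)
    (hη : ∀ v, etaMap ρ v ∈ M) : M = ⊤ := by
  classical
  haveI : Finite (L ⧸ H) := Nat.finite_of_card_ne_zero hH
  haveI : Fintype (L ⧸ H) := Fintype.ofFinite _
  rw [eq_top_iff]
  rintro f -
  have key : f = ∑ c : L ⧸ H, coindRep ρ c.out (etaMap ρ ((f : L → V) c.out)) := by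
    apply Subtype.ext
    rw [Submodule.coe_sum]
    funext x
    rw [Finset.sum_apply]
    have hterm : ∀ c : L ⧸ H,
        ((coindRep ρ c.out (etaMap ρ ((f : L → V) c.out)) : coindV (L := L) ρ) : L → V) x =
        if hx : (c.out⁻¹ * x) ∈ H then ρ (⟨c.out⁻¹ * x, hx⟩ : H)⁻¹ ((f : L → V) c.out)
          else 0 := by
      intro c
      rfl
    have hmem : ∀ c : L ⧸ H, (c.out⁻¹ * x ∈ H) ↔ c = QuotientGroup.mk x := by
      intro c
      rw [← QuotientGroup.eq, QuotientGroup.out_eq']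
    rw [Finset.sum_eq_single (QuotientGroup.mk x : L ⧸ H)]
    · rw [hterm]
      have hpos : ((QuotientGroup.mk x : L ⧸ H).out⁻¹ * x) ∈ H :=
        (hmem _).mpr rfl
      rw [dif_pos hpos]
      conv_lhs => rw [← out_mul_secElt H x, coindV_prop f]
      rfl
    · intro b _ hb
      rw [hterm, dif_neg (fun hc => hb ((hmem b).mp hc))]
    · intro h
      exact absurd (Finset.mem_univ _) h
  rw [key]
  exact Submodule.sum_mem M (fun c _ => hM _ _ (hη _))

/-- The coinduction adjunction: an `H`-map `Res σ → ρ` gives an `L`-map `σ → coindV ρ`. -/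
noncomputable def Fmap (σ : Representation ℂ L W) (ρ : Representation ℂ H V)
    (φ : W →ₗ[ℂ] V) (hφ : IsEquiv (resRep H σ) ρ φ) : W →ₗ[ℂ] coindV (L := L) ρ where
  toFun w := ⟨fun x => φ (σ x⁻¹ w), by
    intro x h
    show φ (σ (x * h)⁻¹ w) = ρ h⁻¹ (φ (σ x⁻¹ w))
    rw [mul_inv_rev, map_mul]
    have := hφ h⁻¹ (σ x⁻¹ w)
    simpa using this⟩
  map_add' w w' := by apply Subtype.ext; funext x; simp
  map_smul' c w := by apply Subtype.ext; funext x; simp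

theorem Fmap_equiv (σ : Representation ℂ L W) (ρ : Representation ℂ H V)
    (φ : W →ₗ[ℂ] V) (hφ : IsEquiv (resRep H σ) ρ φ) :
    IsEquiv σ (coindRep ρ) (Fmap σ ρ φ hφ) := by
  intro g w
  apply Subtype.ext
  funext x
  show φ (σ x⁻¹ (σ g w)) = φ (σ (g⁻¹ * x)⁻¹ w)
  rw [mul_inv_rev, inv_inv, map_mul]
  rfl

theorem Fmap_ne_zero (σ : Representation ℂ L W) (ρ : Representation ℂ H V)
    (φ : W →ₗ[ℂ] V) (hφ : IsEquiv (resRep H σ) ρ φ) (hφ0 : φ ≠ 0) :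
    Fmap σ ρ φ hφ ≠ 0 := by
  obtain ⟨w, hw⟩ : ∃ w, φ w ≠ 0 := by
    by_contra hc
    push_neg at hc
    exact hφ0 (LinearMap.ext fun w => by rw [hc w, LinearMap.zero_apply])
  intro hc
  apply hw
  have : Fmap σ ρ φ hφ w = 0 := by rw [hc, LinearMap.zero_apply]
  have h1 : ((Fmap σ ρ φ hφ w : coindV (L := L) ρ) : L → V) 1 = 0 := by rw [this]; rfl
  have h2 : φ (σ 1⁻¹ w) = 0 := h1
  simpa using h2

end Stmt3

namespace Stmt3
open Module

section Transfer
variable {G : Type*} [Group G] {V W : Type*}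
  [AddCommGroup V] [Module ℂ V] [AddCommGroup W] [Module ℂ W]

theorem realizableSub_isoRep {σ₁ : Representation ℂ G V} {σ₂ : Representation ℂ G W}
    [FiniteDimensional ℂ V] [FiniteDimensional ℂ W]
    (h : IsoRep σ₁ σ₂) {c : IrrCl G} (hr : RealizableSub σ₁ c) : RealizableSub σ₂ c := by
  obtain ⟨U, hU, hcl⟩ := hr
  obtain ⟨e, he⟩ := h
  have hf : IsEquiv (subRep σ₁ U hU.1) σ₂ (e.toLinearMap ∘ₗ U.subtype) :=
    (subtype_equiv hU.1).comp (fun g v => he g v)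
  have hf0 : e.toLinearMap ∘ₗ U.subtype ≠ 0 := by
    obtain ⟨u, hu, hu0⟩ := Submodule.exists_mem_ne_zero_of_ne_bot hU.2.1
    intro hc
    have : e u = 0 := by
      have := congrArg (fun f => f ⟨u, hu⟩) hc
      simpa using this
    exact hu0 (by simpa using e.injective (by simpa using this))
  have := realizableSub_of_equiv (isIrr_subRep hU) hf hf0
  rwa [hcl] at this
end Transfer

variable {L : Type*} [Group L] {H : Subgroup L}

theorem phi_exists (hH : H.index ≠ 0) (c : IrrCl H) :
    ∃ d : IrrCl L, d.1 ≤ H.index * c.1 ∧ RealizableSub (resRep H (repOf d)) c := by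
  classical
  set ρ := repOf c with hρdef
  haveI : FiniteDimensional ℂ (coindV (L := L) ρ) := coindV_fd hH ρ
  haveI : Nontrivial (coindV (L := L) ρ) := by
    rw [← Module.finrank_pos_iff (R := ℂ)]
    rw [coind_finrank hH]
    have h1 : 0 < H.index := Nat.pos_of_ne_zero hH
    have h2 : 0 < finrank ℂ (Fin c.1 → ℂ) := by
      rw [Module.finrank_fin_fun]
      exact deg_pos c
    positivity
  obtain ⟨M, -, hM⟩ := exists_isMaxInvt_ge (invt_bot (coindRep ρ)) bot_ne_top
  set σt := quotRep (coindRep ρ) M hM.1 with hσt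
  have hσirr : IsIrr σt := isIrr_quotRep hM
  refine ⟨classOf σt hσirr, ?_, ?_⟩
  · have h1 : finrank ℂ (coindV (L := L) ρ ⧸ M) ≤ finrank ℂ (coindV (L := L) ρ) :=
      Submodule.finrank_quotient_le M
    rw [coind_finrank hH, Module.finrank_fin_fun] at h1
    simpa using h1
  · -- the composite H-map ρ → Res σt
    set φ : (Fin c.1 → ℂ) →ₗ[ℂ] (coindV (L := L) ρ ⧸ M) := M.mkQ ∘ₗ etaMap ρ with hφdef
    have hφ : IsEquiv (repOf c) (resRep H σt) φ :=
      (eta_equiv ρ).comp (isEquiv_resRep H (mkQ_equiv hM.1))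
    have hφ0 : φ ≠ 0 := by
      intro hzero
      apply hM.2.1
      apply coind_generated hH hM.1
      intro v
      have : M.mkQ (etaMap ρ v) = 0 := by
        have := congrArg (fun f => f v) hzero
        simpa [hφdef] using this
      exact (Submodule.Quotient.mk_eq_zero M).mp (by simpa using this)
    have hreal := realizableSub_of_equiv (repOf_irr c) hφ hφ0
    rw [classOf_repOf c] at hreal
    exact realizableSub_isoRep
      (isoRep_resRep H (isoRep_repOf hσirr rfl)) hreal

theorem psi_exists (hH : H.index ≠ 0) (d : IrrCl L) :
    ∃ c : IrrCl H, c.1 ≤ d.1 ∧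
      ∀ (_ : FiniteDimensional ℂ (coindV (L := L) (repOf c))),
        RealizableSub (coindRep (repOf c)) d := by
  classical
  set σ := repOf d with hσdef
  haveI : Nontrivial (Fin d.1 → ℂ) := by
    haveI : Nonempty (Fin d.1) := ⟨⟨0, deg_pos d⟩⟩
    infer_instance
  obtain ⟨M, -, hM⟩ := exists_isMaxInvt_ge (invt_bot (resRep H σ)) bot_ne_top
  set ρb := quotRep (resRep H σ) M hM.1 with hρb
  have hρirr : IsIrr ρb := isIrr_quotRep hM
  set c := classOf ρb hρirr with hcdef
  obtain ⟨e, he⟩ := isoRep_repOf hρirr (show classOf ρb hρirr = c from rfl)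
  refine ⟨c, ?_, ?_⟩
  · have h1 : finrank ℂ ((Fin d.1 → ℂ) ⧸ M) ≤ finrank ℂ (Fin d.1 → ℂ) :=
      Submodule.finrank_quotient_le M
    rw [Module.finrank_fin_fun] at h1
    simpa [hcdef] using h1
  · intro hfd
    set φ : (Fin d.1 → ℂ) →ₗ[ℂ] (Fin c.1 → ℂ) := e.toLinearMap ∘ₗ M.mkQ with hφdef
    have hφ : IsEquiv (resRep H σ) (repOf c) φ :=
      (mkQ_equiv hM.1).comp (fun g v => he g v)
    have hφ0 : φ ≠ 0 := by
      obtain ⟨v, hv⟩ : ∃ v, v ∉ M := by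
        by_contra hc
        push_neg at hc
        exact hM.2.1 (eq_top_iff.mpr fun x _ => hc x)
      intro hzero
      apply hv
      have h1 : φ v = 0 := by rw [hzero]; rfl
      have h2 : M.mkQ v = 0 := by
        apply e.injective
        simpa [hφdef] using h1
      exact (Submodule.Quotient.mk_eq_zero M).mp (by simpa using h2)
    have hF := realizableSub_of_equiv (repOf_irr d)
      (Fmap_equiv σ (repOf c) φ hφ) (Fmap_ne_zero σ (repOf c) φ hφ hφ0)
    rwa [classOf_repOf d] at hF

end Stmt3

namespace Stmt3
open Module

/-- Numeric comparison of rpow weights. -/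
theorem rpow_bound {k x m : ℕ} (hk : 0 < k) (hx : 0 < x) (hm : 0 < m)
    (h1 : m ≤ k * x) (h2 : x ≤ k * m) (s : ℝ) :
    (x : ℝ) ^ (-s) ≤ ((k : ℝ) ^ s + (k : ℝ) ^ (-s)) * (m : ℝ) ^ (-s) := by
  have hkR : (0 : ℝ) < k := by exact_mod_cast hk
  have hxR : (0 : ℝ) < x := by exact_mod_cast hx
  have hmR : (0 : ℝ) < m := by exact_mod_cast hm
  rcases le_or_gt 0 s with hs | hs
  · have key : (x : ℝ) ^ (-s) ≤ (k : ℝ) ^ s * (m : ℝ) ^ (-s) := by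
      have hxinv : (x : ℝ)⁻¹ ≤ (k : ℝ) / m := by
        rw [inv_eq_one_div, div_le_div_iff₀ hxR hmR]
        have : (m : ℝ) ≤ (k : ℝ) * x := by exact_mod_cast h1
        linarith
      calc (x : ℝ) ^ (-s) = ((x : ℝ)⁻¹) ^ s := by
            rw [Real.rpow_neg hxR.le, ← Real.inv_rpow hxR.le]
        _ ≤ ((k : ℝ) / m) ^ s := Real.rpow_le_rpow (by positivity) hxinv hs
        _ = (k : ℝ) ^ s * (m : ℝ) ^ (-s) := by
            rw [Real.div_rpow hkR.le hmR.le, Real.rpow_neg hmR.le, div_eq_mul_inv]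
    refine key.trans ?_
    have hpad : (0 : ℝ) ≤ (k : ℝ) ^ (-s) := Real.rpow_nonneg hkR.le _
    have hms : (0 : ℝ) ≤ (m : ℝ) ^ (-s) := Real.rpow_nonneg hmR.le _
    nlinarith
  · have key : (x : ℝ) ^ (-s) ≤ (k : ℝ) ^ (-s) * (m : ℝ) ^ (-s) := by
      have hxkm : (x : ℝ) ≤ (k : ℝ) * m := by exact_mod_cast h2
      calc (x : ℝ) ^ (-s) ≤ ((k : ℝ) * m) ^ (-s) :=
            Real.rpow_le_rpow hxR.le hxkm (by linarith)
        _ = (k : ℝ) ^ (-s) * (m : ℝ) ^ (-s) := Real.mul_rpow hkR.le hmR.le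
    refine key.trans ?_
    have hpad : (0 : ℝ) ≤ (k : ℝ) ^ s := Real.rpow_nonneg hkR.le _
    have hms : (0 : ℝ) ≤ (m : ℝ) ^ (-s) := Real.rpow_nonneg hmR.le _
    nlinarith

/-- Abstract comparison of weighted series along a map with controlled fibers. -/
theorem summable_transfer {A B : Type*} {wA : A → ℕ} {wB : B → ℕ} {F : A → B} {k : ℕ}
    (hk : 0 < k) (hA : ∀ a, 0 < wA a) (hB : ∀ b, 0 < wB b)
    (hfin : ∀ b, (F ⁻¹' {b}).Finite)
    (hsum : ∀ b (T : Finset A), (∀ a ∈ T, F a = b) → ∑ a ∈ T, wA a ≤ k * wB b)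
    (hlow : ∀ a, wB (F a) ≤ k * wA a)
    {s : ℝ} (h : Summable fun b => (wB b : ℝ) ^ (-s)) :
    Summable fun a => (wA a : ℝ) ^ (-s) := by
  classical
  rw [← (Equiv.sigmaFiberEquiv F).summable_iff]
  set f : (Σ b : B, {a // F a = b}) → ℝ :=
    (fun a => (wA a : ℝ) ^ (-s)) ∘ (Equiv.sigmaFiberEquiv F) with hf
  have hnn : ∀ p, 0 ≤ f p := fun p => Real.rpow_nonneg (Nat.cast_nonneg _) _
  rw [summable_sigma_of_nonneg hnn]
  haveI hfinsub : ∀ b, Finite {a // F a = b} := fun b => (hfin b).to_subtype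
  constructor
  · intro b
    exact Summable.of_finite
  · set C : ℝ := (k : ℝ) ^ 2 * ((k : ℝ) ^ s + (k : ℝ) ^ (-s)) with hC
    apply Summable.of_nonneg_of_le (fun b => tsum_nonneg (fun a => hnn ⟨b, a⟩))
      (fun b => ?_) (h.mul_left C)
    haveI : Fintype {a // F a = b} := Fintype.ofFinite _
    rw [tsum_fintype]
    have hterm : ∀ a : {a // F a = b},
        f ⟨b, a⟩ ≤ ((k : ℝ) ^ s + (k : ℝ) ^ (-s)) * (wB b : ℝ) ^ (-s) := by
      intro a
      have h1 : wB b ≤ k * wA a.1 := by have := hlow a.1; rwa [a.2] at this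
      have h2 : wA a.1 ≤ k * wB b := by
        have := hsum b {a.1} (by simp [a.2])
        simpa using this
      exact rpow_bound hk (hA a.1) (hB b) h1 h2 s
    have hcard : Fintype.card {a // F a = b} ≤ k * k := by
      set T : Finset A := (Finset.univ : Finset {a // F a = b}).map (Function.Embedding.subtype (fun a => F a = b)) with hT
      have hTsub : ∀ a ∈ T, F a = b := by
        intro a ha
        obtain ⟨a0, -, rfl⟩ := Finset.mem_map.mp ha
        exact a0.2
      have hs1 : ∑ a ∈ T, wA a ≤ k * wB b := hsum b T hTsub
      have hs2 : Fintype.card {a // F a = b} * wB b ≤ k * ∑ a ∈ T, wA a := by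
        rw [Finset.mul_sum]
        calc Fintype.card {a // F a = b} * wB b = ∑ _a ∈ T, wB b := by
              rw [Finset.sum_const, hT, Finset.card_map, Finset.card_univ, smul_eq_mul]
          _ ≤ ∑ a ∈ T, k * wA a := by
              refine Finset.sum_le_sum ?_
              intro a ha
              rw [← hTsub a ha]
              exact hlow a
      have hs3 : Fintype.card {a // F a = b} * wB b ≤ (k * k) * wB b := by
        calc Fintype.card {a // F a = b} * wB b ≤ k * ∑ a ∈ T, wA a := hs2
          _ ≤ k * (k * wB b) := Nat.mul_le_mul_left k hs1
          _ = (k * k) * wB b := by ring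
      exact Nat.le_of_mul_le_mul_right hs3 (hB b)
    calc ∑ a : {a // F a = b}, f ⟨b, a⟩
        ≤ Fintype.card {a // F a = b} •
            (((k : ℝ) ^ s + (k : ℝ) ^ (-s)) * (wB b : ℝ) ^ (-s)) := by
          rw [← Finset.card_univ]
          exact Finset.sum_le_card_nsmul _ _ _ (fun a _ => hterm a)
      _ ≤ C * (wB b : ℝ) ^ (-s) := by
          rw [nsmul_eq_mul, hC]
          have hcardR : (Fintype.card {a // F a = b} : ℝ) ≤ (k : ℝ) ^ 2 := by
            rw [sq]
            exact_mod_cast hcard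
          have hnn2 : (0:ℝ) ≤ ((k : ℝ) ^ s + (k : ℝ) ^ (-s)) * (wB b : ℝ) ^ (-s) := by
            have := Real.rpow_nonneg (Nat.cast_nonneg (α := ℝ) k) s
            have := Real.rpow_nonneg (Nat.cast_nonneg (α := ℝ) k) (-s)
            have := Real.rpow_nonneg (Nat.cast_nonneg (α := ℝ) (wB b)) (-s)
            positivity
          calc (Fintype.card {a // F a = b} : ℝ) *
              (((k : ℝ) ^ s + (k : ℝ) ^ (-s)) * (wB b : ℝ) ^ (-s))
              ≤ (k : ℝ) ^ 2 * (((k : ℝ) ^ s + (k : ℝ) ^ (-s)) * (wB b : ℝ) ^ (-s)) :=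
                mul_le_mul_of_nonneg_right hcardR hnn2
            _ = (k : ℝ) ^ 2 * ((k : ℝ) ^ s + (k : ℝ) ^ (-s)) * (wB b : ℝ) ^ (-s) := by ring

/-- Translation between the `rn`-series and the series over all irreducible classes. -/
theorem summable_iff_rn (G : Type*) [Group G] (hfin : ∀ n, Finite (IrrClasses G n)) (s : ℝ) :
    (Summable fun n : ℕ => (rn G (n + 1) : ℝ) * ((n + 1 : ℝ) ^ (-s))) ↔
      Summable (fun c : IrrCl G => (c.1 : ℝ) ^ (-s)) := by
  have hnn : ∀ p : IrrCl G, 0 ≤ ((p.1 : ℝ)) ^ (-s) :=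
    fun p => Real.rpow_nonneg (Nat.cast_nonneg _) _
  rw [show (fun c : IrrCl G => ((c.1 : ℝ)) ^ (-s)) =
    (fun p : Σ n : ℕ, IrrClasses G n => ((p.1 : ℝ)) ^ (-s)) from rfl]
  rw [summable_sigma_of_nonneg hnn]
  have hfib : ∀ n : ℕ, Summable (fun _ : IrrClasses G n => ((n : ℝ)) ^ (-s)) := by
    intro n
    haveI := hfin n
    exact Summable.of_finite
  have htsum : ∀ n : ℕ, (∑' _ : IrrClasses G n, ((n : ℝ)) ^ (-s)) =
      (rn G n : ℝ) * ((n : ℝ)) ^ (-s) := by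
    intro n
    haveI := hfin n
    haveI : Fintype (IrrClasses G n) := Fintype.ofFinite _
    rw [tsum_fintype, Finset.sum_const, Finset.card_univ, nsmul_eq_mul, rn,
      Nat.card_eq_fintype_card]
  constructor
  · intro h
    refine ⟨hfib, ?_⟩
    have h2 : Summable (fun n : ℕ => (rn G n : ℝ) * ((n : ℝ)) ^ (-s)) := by
      rw [← _root_.summable_nat_add_iff 1]
      convert h using 2 with n
      · rfl
      · push_cast
        rfl
    exact h2.congr (fun n => (htsum n).symm)
  · rintro ⟨-, h⟩
    have h2 : Summable (fun n : ℕ => (rn G n : ℝ) * ((n : ℝ)) ^ (-s)) :=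
      (h.congr htsum)
    rw [← _root_.summable_nat_add_iff 1] at h2
    convert h2 using 2 with n
    · rfl
    · push_cast
      rfl

end Stmt3

namespace Stmt3
open Module

variable {L : Type*} [Group L] {H : Subgroup L}

noncomputable def Phi (hH : H.index ≠ 0) : IrrCl H → IrrCl L :=
  fun c => (phi_exists hH c).choose

theorem Phi_deg (hH : H.index ≠ 0) (c : IrrCl H) : (Phi hH c).1 ≤ H.index * c.1 :=
  (phi_exists hH c).choose_spec.1

theorem Phi_real (hH : H.index ≠ 0) (c : IrrCl H) :
    RealizableSub (resRep H (repOf (Phi hH c))) c :=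
  (phi_exists hH c).choose_spec.2

noncomputable def Psi (hH : H.index ≠ 0) : IrrCl L → IrrCl H :=
  fun d => (psi_exists hH d).choose

theorem Psi_deg (hH : H.index ≠ 0) (d : IrrCl L) : (Psi hH d).1 ≤ d.1 :=
  (psi_exists hH d).choose_spec.1

theorem Psi_real (hH : H.index ≠ 0) (d : IrrCl L) :
    ∀ (_ : FiniteDimensional ℂ (coindV (L := L) (repOf (Psi hH d)))),
      RealizableSub (coindRep (repOf (Psi hH d))) d :=
  (psi_exists hH d).choose_spec.2

theorem phi_fiber_finite (hH : H.index ≠ 0) (d : IrrCl L) :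
    ((Phi hH) ⁻¹' {d}).Finite := by
  apply Set.Finite.subset (realizable_finite (resRep H (repOf d)))
  intro c hc
  have h := Phi_real hH c
  have hcd : Phi hH c = d := hc
  rw [hcd] at h
  exact h

theorem phi_fiber_sum (hH : H.index ≠ 0) (d : IrrCl L) (T : Finset (IrrCl H))
    (hT : ∀ c ∈ T, Phi hH c = d) : ∑ c ∈ T, c.1 ≤ H.index * d.1 := by
  have h := sum_deg_le (resRep H (repOf d)) T (fun c hc => by
    have := Phi_real hH c
    rwa [hT c hc] at this)
  rw [Module.finrank_fin_fun] at h
  calc ∑ c ∈ T, c.1 ≤ d.1 := h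
    _ ≤ H.index * d.1 := Nat.le_mul_of_pos_left _ (Nat.pos_of_ne_zero hH)

theorem psi_fiber_finite (hH : H.index ≠ 0) (c : IrrCl H) :
    ((Psi hH) ⁻¹' {c}).Finite := by
  haveI := coindV_fd (L := L) hH (repOf c)
  apply Set.Finite.subset (realizable_finite (coindRep (repOf c)))
  intro d hd
  have h := Psi_real hH d (coindV_fd hH _)
  have hdc : Psi hH d = c := hd
  rw [hdc] at h
  exact h

theorem psi_fiber_sum (hH : H.index ≠ 0) (c : IrrCl H) (T : Finset (IrrCl L))
    (hT : ∀ d ∈ T, Psi hH d = c) : ∑ d ∈ T, d.1 ≤ H.index * c.1 := by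
  haveI := coindV_fd (L := L) hH (repOf c)
  have h := sum_deg_le (coindRep (repOf c)) T (fun d hd => by
    have h0 := Psi_real hH d (coindV_fd hH _)
    rwa [hT d hd] at h0)
  rwa [coind_finrank hH, Module.finrank_fin_fun] at h

theorem finite_irrClasses_H (hH : H.index ≠ 0) (hL : ∀ n : ℕ, Finite (IrrClasses L n))
    (n : ℕ) : Finite (IrrClasses H n) := by
  classical
  set S : Set (IrrCl H) := {c | c.1 = n} with hS
  have hT : {d : IrrCl L | d.1 ≤ H.index * n}.Finite := by
    haveI : ∀ m : Fin (H.index * n + 1), Finite (IrrClasses L m) := fun m => hL m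
    have hinj : Function.Injective (fun d : {d : IrrCl L // d.1 ≤ H.index * n} =>
        (⟨⟨d.1.1, Nat.lt_succ_of_le d.2⟩, d.1.2⟩ :
          Σ m : Fin (H.index * n + 1), IrrClasses L (m : ℕ))) := by
      rintro ⟨⟨n1, q1⟩, h1⟩ ⟨⟨n2, q2⟩, h2⟩ heq
      obtain ⟨hfst, hsnd⟩ := Sigma.mk.inj_iff.mp heq
      apply Subtype.ext
      have hnn : n1 = n2 := by simpa using congrArg Fin.val hfst
      subst hnn
      have hq : q1 = q2 := eq_of_heq hsnd
      rw [hq]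
    haveI : Finite ↥{d : IrrCl L | d.1 ≤ H.index * n} := Finite.of_injective _ hinj
    exact Set.toFinite _
  have hsub : S ⊆ ⋃ d ∈ {d : IrrCl L | d.1 ≤ H.index * n}, (Phi hH) ⁻¹' {d} := by
    intro c hc
    have hcn : c.1 = n := hc
    refine Set.mem_biUnion ?_ rfl
    have := Phi_deg hH c
    rwa [hcn] at this
  have hSfin : S.Finite := (hT.biUnion (fun d _ => phi_fiber_finite hH d)).subset hsub
  haveI := hSfin.to_subtype
  apply Finite.of_injective (fun q : IrrClasses H n => (⟨⟨n, q⟩, rfl⟩ : S))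
  intro q1 q2 heq
  have h1 : (⟨n, q1⟩ : IrrCl H) = ⟨n, q2⟩ := congrArg Subtype.val heq
  exact eq_of_heq (Sigma.mk.inj_iff.mp h1).2

end Stmt3

theorem stmt3' (L : Type*) [Group L] (H : Subgroup L) (hH : H.index ≠ 0)
    (hL : ∀ n : ℕ, Finite (IrrClasses L n)) :
    (∀ n : ℕ, Finite (IrrClasses ↥H n)) ∧
      ∀ s : ℝ,
        (Summable fun n : ℕ => (rn ↥H (n + 1) : ℝ) * ((n + 1 : ℝ) ^ (-s))) ↔
          (Summable fun n : ℕ => (rn L (n + 1) : ℝ) * ((n + 1 : ℝ) ^ (-s))) := by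
  classical
  have hfinH : ∀ n : ℕ, Finite (IrrClasses ↥H n) := Stmt3.finite_irrClasses_H hH hL
  refine ⟨hfinH, fun s => ?_⟩
  rw [Stmt3.summable_iff_rn ↥H hfinH s, Stmt3.summable_iff_rn L hL s]
  have hk : 0 < H.index := Nat.pos_of_ne_zero hH
  constructor
  · intro h
    refine Stmt3.summable_transfer (wA := fun d : Stmt3.IrrCl L => d.1)
      (wB := fun c : Stmt3.IrrCl ↥H => c.1) (F := Stmt3.Psi hH) (k := H.index)
      hk Stmt3.deg_pos Stmt3.deg_pos (Stmt3.psi_fiber_finite hH)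
      (fun c T hT => Stmt3.psi_fiber_sum hH c T hT) ?_ h
    intro d
    calc (Stmt3.Psi hH d).1 ≤ d.1 := Stmt3.Psi_deg hH d
      _ ≤ H.index * d.1 := Nat.le_mul_of_pos_left _ hk
  · intro h
    exact Stmt3.summable_transfer (wA := fun c : Stmt3.IrrCl ↥H => c.1)
      (wB := fun d : Stmt3.IrrCl L => d.1) (F := Stmt3.Phi hH) (k := H.index)
      hk Stmt3.deg_pos Stmt3.deg_pos (Stmt3.phi_fiber_finite hH)
      (fun d T hT => Stmt3.phi_fiber_sum hH d T hT) (Stmt3.Phi_deg hH) h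

/-- If `H` is a finite-index subgroup of `L` and `r_n(L)` is finite
for every `n`, then `r_n(H)` is finite for every `n` and, for every real `s`, the series
`∑_{n≥1} r_n(H) n^{−s}` converges iff `∑_{n≥1} r_n(L) n^{−s}` converges (in particular the
two representation zeta functions have the same abscissa of convergence). -/
theorem stmt3 (L : Type*) [Group L] (H : Subgroup L) (hH : H.index ≠ 0)
    (hL : ∀ n : ℕ, Finite (IrrClasses L n)) :
    (∀ n : ℕ, Finite (IrrClasses ↥H n)) ∧
      ∀ s : ℝ,
        (Summable fun n : ℕ => (rn ↥H (n + 1) : ℝ) * ((n + 1 : ℝ) ^ (-s))) ↔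
          (Summable fun n : ℕ => (rn L (n + 1) : ℝ) * ((n + 1 : ℝ) ^ (-s))) := by
  exact stmt3' L H hH hL
end

section
/- Let n ≥ 1, let p be a prime, and let A ∈ M_n(ℤ_p) satisfy A^k → 0 as k → ∞. Then every entry of A^n is divisible by p (i.e. A^n ∈ p·M_n(ℤ_p)), and consequently for every natural number N, every entry of A^N is divisible by p^{⌊N/n⌋}. -/
open Filter Polynomial

private lemma matrix_map_pow {n : ℕ} {R S : Type*} [CommRing R] [CommRing S]
    (f : R →+* S) (A : Matrix (Fin n) (Fin n) R) (k : ℕ) :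
    (A.map f) ^ k = (A ^ k).map f := by
  induction k with
  | zero => simp [Matrix.map_one f f.map_zero f.map_one]
  | succ k ih => rw [pow_succ, pow_succ, ih, Matrix.map_mul]

/-- If `A ∈ M_n(ℤ_p)` satisfies `A^k → 0`, then every entry of `A^n` is
divisible by `p`, and consequently every entry of `A^N` is divisible by `p^⌊N/n⌋`. -/
theorem stmt7 (n : ℕ) (hn : 1 ≤ n) (p : ℕ) [Fact p.Prime]
    (A : Matrix (Fin n) (Fin n) ℤ_[p])
    (hA : Filter.Tendsto (fun k => A ^ k) Filter.atTop (nhds 0)) :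
    (∀ i j, (p : ℤ_[p]) ∣ (A ^ n) i j) ∧
      ∀ N : ℕ, ∀ i j, (p : ℤ_[p]) ^ (N / n) ∣ (A ^ N) i j := by
  -- entries of A^k tend to 0, so eventually all entries are divisible by p
  have hev : ∀ᶠ k in atTop, ∀ i j, (p : ℤ_[p]) ∣ (A ^ k) i j := by
    rw [Filter.eventually_all]
    intro i
    rw [Filter.eventually_all]
    intro j
    have h1 : Tendsto (fun k => (A ^ k) i j) atTop (nhds 0) := by
      have := ((continuous_apply j).comp (continuous_apply i)).tendsto (0 : Matrix (Fin n) (Fin n) ℤ_[p]) |>.comp hA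
      exact this
    have h2 := h1.eventually (Metric.ball_mem_nhds (0 : ℤ_[p]) one_pos)
    filter_upwards [h2] with k hk
    rw [← PadicInt.norm_lt_one_iff_dvd]
    simpa [dist_eq_norm] using hk
  obtain ⟨k, hk⟩ := hev.exists
  -- reduce mod p
  set B : Matrix (Fin n) (Fin n) (ZMod p) := A.map (PadicInt.toZMod) with hBdef
  have hker : ∀ x : ℤ_[p], (p : ℤ_[p]) ∣ x → PadicInt.toZMod x = 0 := by
    intro x hx
    have : x ∈ RingHom.ker (PadicInt.toZMod : ℤ_[p] →+* ZMod p) := by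
      rw [PadicInt.ker_toZMod, PadicInt.maximalIdeal_eq_span_p, Ideal.mem_span_singleton]
      exact hx
    exact this
  have hBk : B ^ k = 0 := by
    rw [hBdef, matrix_map_pow]
    ext i j
    exact hker _ (hk i j)
  have hBnil : IsNilpotent B := ⟨k, hBk⟩
  -- charpoly of nilpotent matrix over a field is X^n
  have hch : B.charpoly = X ^ n := by
    have h := Matrix.isNilpotent_charpoly_sub_pow_of_isNilpotent hBnil
    have h0 : B.charpoly - X ^ Fintype.card (Fin n) = 0 := h.eq_zero
    rw [sub_eq_zero] at h0
    simpa using h0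
  have hBn : B ^ n = 0 := by
    have := B.aeval_self_charpoly
    rwa [hch, map_pow, aeval_X] at this
  have main : ∀ i j, (p : ℤ_[p]) ∣ (A ^ n) i j := by
    intro i j
    rw [← PadicInt.norm_lt_one_iff_dvd]
    have : PadicInt.toZMod ((A ^ n) i j) = 0 := by
      have : ((A ^ n).map PadicInt.toZMod) i j = 0 := by
        rw [← matrix_map_pow, ← hBdef, hBn]; rfl
      simpa [Matrix.map_apply] using this
    have hmem : (A ^ n) i j ∈ RingHom.ker (PadicInt.toZMod : ℤ_[p] →+* ZMod p) := this
    rw [PadicInt.ker_toZMod, PadicInt.maximalIdeal_eq_span_p, Ideal.mem_span_singleton,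
      ← PadicInt.norm_lt_one_iff_dvd] at hmem
    exact hmem
  refine ⟨main, ?_⟩
  have hpow : ∀ q : ℕ, ∀ i j, (p : ℤ_[p]) ^ q ∣ ((A ^ n) ^ q) i j := by
    intro q
    induction q with
    | zero => intro i j; simp
    | succ q ih =>
      intro i j
      rw [pow_succ, pow_succ, Matrix.mul_apply]
      refine Finset.dvd_sum fun x _ => ?_
      exact mul_dvd_mul (ih i x) (main x j)
  intro N i j
  have hN : A ^ N = (A ^ n) ^ (N / n) * A ^ (N % n) := by
    rw [← pow_mul, ← pow_add, Nat.div_add_mod]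
  rw [hN, Matrix.mul_apply]
  exact Finset.dvd_sum fun x _ => (hpow (N / n) i x).mul_right _
end
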